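/- Let D be a complete, cocomplete, extremally co-well-powered, (extremal epi, mono) category. Then QD is an (extremal epi, mono) category. -/

import Mathlib

open CategoryTheory CategoryTheory.Limits

universe w v u v₂ u₂

namespace FilteredCats

variable {D : Type u} [Category.{v} D]

/-- The class of morphisms of `D` with source `X`. -/
def MorFrom (X : D) : Type (max u v) := Σ Y : D, X ⟶ Y

/-- `Dom δ₁ δ₂` means `δ₁ ≥ δ₂`: there is `h` with `h ∘ δ₁ = δ₂`. -/
def Dom {X : D} (δ₁ δ₂ : MorFrom X) : Prop :=
  ∃ h : δ₁.1 ⟶ δ₂.1, δ₁.2 ≫ h = δ₂.2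

/-- A projective filtration on `X`: a nonempty, directed, saturated class of
morphisms with source `X`. -/
structure ProjFilt (X : D) where
  carrier : Set (MorFrom X)
  nonempty' : carrier.Nonempty
  directed' : ∀ δ₁ ∈ carrier, ∀ δ₂ ∈ carrier, ∃ δ ∈ carrier, Dom δ δ₁ ∧ Dom δ δ₂
  saturated' : ∀ δ₁ ∈ carrier, ∀ δ₂, Dom δ₁ δ₂ → δ₂ ∈ carrier

/-- The pull back of a set of morphisms with source `X` along `f : X' ⟶ X`. -/
def pullSet {X' X : D} (f : X' ⟶ X) (S : Set (MorFrom X)) : Set (MorFrom X') :=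
  {δ' | ∃ δ ∈ S, δ' = ⟨δ.1, f ≫ δ.2⟩}

/-- The pull back of a projective filtration along `f : X' ⟶ X`. -/
def ProjFilt.pull {X' X : D} (f : X' ⟶ X) (P : ProjFilt X) : ProjFilt X' where
  carrier := pullSet f P.carrier
  nonempty' := by
    obtain ⟨δ, hδ⟩ := P.nonempty'
    exact ⟨⟨δ.1, f ≫ δ.2⟩, δ, hδ, rfl⟩
  directed' := by
    rintro _ ⟨δ₁, h₁, rfl⟩ _ ⟨δ₂, h₂, rfl⟩
    obtain ⟨δ, hδ, ⟨g₁, hg₁⟩, ⟨g₂, hg₂⟩⟩ := P.directed' δ₁ h₁ δ₂ h₂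
    exact ⟨⟨δ.1, f ≫ δ.2⟩, ⟨δ, hδ, rfl⟩,
      ⟨g₁, by simp [hg₁]⟩, ⟨g₂, by simp [hg₂]⟩⟩
  saturated' := by
    rintro _ ⟨δ, hδ, rfl⟩ δ₂ ⟨h, hh⟩
    refine ⟨⟨δ₂.1, δ.2 ≫ h⟩, P.saturated' δ hδ _ ⟨h, rfl⟩, ?_⟩
    obtain ⟨Y₂, g₂⟩ := δ₂
    have hg : g₂ = f ≫ (δ.2 ≫ h) := by simpa using hh.symm
    exact Sigma.ext rfl (heq_of_eq hg)

/-- A projectively filtered object of `D`. -/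
structure PObj (D : Type u) [Category.{v} D] where
  base : D
  filt : ProjFilt base

/-- A morphism of projectively filtered objects: a morphism of the underlying
objects such that the pull back of the target filtration is contained in the
source filtration. -/
structure PHom (A B : PObj D) : Type v where
  toHom : A.base ⟶ B.base
  mem : ∀ δ ∈ B.filt.carrier, (⟨δ.1, toHom ≫ δ.2⟩ : MorFrom A.base) ∈ A.filt.carrier

theorem PHom.ext' {A B : PObj D} {f g : PHom A B} (h : f.toHom = g.toHom) : f = g := by
  cases f; cases g; cases h; rfl

instance : Category.{v} (PObj D) where
  Hom := PHom
  id A := ⟨𝟙 A.base, fun δ hδ => by rw [Category.id_comp]; exact hδ⟩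
  comp {A B C} f g := ⟨f.toHom ≫ g.toHom, fun δ hδ => by
    have h1 := g.mem δ hδ
    have h2 := f.mem _ h1
    simpa using h2⟩
  id_comp f := PHom.ext' (Category.id_comp _)
  comp_id f := PHom.ext' (Category.comp_id _)
  assoc f g h := PHom.ext' (Category.assoc _ _ _)

@[simp] theorem PObj.id_toHom (A : PObj D) : PHom.toHom (𝟙 A) = 𝟙 A.base := rfl
@[simp] theorem PObj.comp_toHom {A B C : PObj D} (f : A ⟶ B) (g : B ⟶ C) :
    PHom.toHom (f ≫ g) = PHom.toHom f ≫ PHom.toHom g := rfl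

/-- The forgetful functor `PD → D`. -/
def Pforget (D : Type u) [Category.{v} D] : PObj D ⥤ D where
  obj A := A.base
  map f := PHom.toHom f

/-- The discrete filtration functor `D → PD`, `X ↦ (X, M(X))`. -/
def Pdiscrete (D : Type u) [Category.{v} D] : D ⥤ PObj D where
  obj X :=
    { base := X
      filt :=
        { carrier := Set.univ
          nonempty' := ⟨⟨X, 𝟙 X⟩, trivial⟩
          directed' := fun δ₁ _ δ₂ _ =>
            ⟨⟨X, 𝟙 X⟩, trivial, ⟨δ₁.2, Category.id_comp _⟩, ⟨δ₂.2, Category.id_comp _⟩⟩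
          saturated' := fun _ _ _ _ => trivial } }
  map f := ⟨f, fun _ _ => trivial⟩

/-- The functor `PD → PE` induced by a functor `G : D → E`. -/
def Pfunctor {E : Type u₂} [Category.{v₂} E] (G : D ⥤ E) : PObj D ⥤ PObj E where
  obj A :=
    { base := G.obj A.base
      filt :=
        { carrier := {δ' | ∃ δ ∈ A.filt.carrier,
            Dom (⟨G.obj δ.1, G.map δ.2⟩ : MorFrom (G.obj A.base)) δ'}
          nonempty' := by
            obtain ⟨δ, hδ⟩ := A.filt.nonempty'
            exact ⟨⟨G.obj δ.1, G.map δ.2⟩, δ, hδ, ⟨𝟙 _, Category.comp_id _⟩⟩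
          directed' := by
            rintro δ'₁ ⟨δ₁, h₁, g₁, hg₁⟩ δ'₂ ⟨δ₂, h₂, g₂, hg₂⟩
            obtain ⟨δ, hδ, ⟨k₁, hk₁⟩, ⟨k₂, hk₂⟩⟩ := A.filt.directed' δ₁ h₁ δ₂ h₂
            refine ⟨⟨G.obj δ.1, G.map δ.2⟩, ⟨δ, hδ, ⟨𝟙 _, Category.comp_id _⟩⟩,
              ⟨G.map k₁ ≫ g₁, ?_⟩, ⟨G.map k₂ ≫ g₂, ?_⟩⟩
            · rw [← Category.assoc, ← G.map_comp, hk₁, hg₁]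
            · rw [← Category.assoc, ← G.map_comp, hk₂, hg₂]
          saturated' := by
            rintro δ'₁ ⟨δ, hδ, g, hg⟩ δ'₂ ⟨h, hh⟩
            exact ⟨δ, hδ, ⟨g ≫ h, by rw [← Category.assoc, hg, hh]⟩⟩ } }
  map {A B} f :=
    ⟨G.map (PHom.toHom f), by
      rintro δ' ⟨δ, hδ, g, hg⟩
      exact ⟨⟨δ.1, PHom.toHom f ≫ δ.2⟩, f.mem δ hδ,
        ⟨g, by rw [← hg, ← Category.assoc, ← G.map_comp]⟩⟩⟩
  map_id A := PHom.ext' (G.map_id _)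
  map_comp f g := PHom.ext' (G.map_comp _ _)

/-- An extremal epimorphism: an epimorphism such that in any factorisation
through a monomorphism, the monomorphism is an isomorphism. -/
def ExtremalEpi {C : Type u₂} [Category.{v₂} C] {X Y : C} (e : X ⟶ Y) : Prop :=
  Epi e ∧ ∀ ⦃Z : C⦄ (g : X ⟶ Z) (m : Z ⟶ Y), Mono m → g ≫ m = e → IsIso m

/-- An (extremal epi, mono) category: every morphism factors as an extremal
epimorphism followed by a monomorphism and such factorisations have the
diagonal fill-in property. -/
structure EMCat (C : Type u₂) [Category.{v₂} C] : Prop where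
  fact : ∀ {X Y : C} (f : X ⟶ Y), ∃ (Z : C) (e : X ⟶ Z) (m : Z ⟶ Y),
    ExtremalEpi e ∧ Mono m ∧ e ≫ m = f
  diag : ∀ {A B Z X : C} (e : A ⟶ B) (m : Z ⟶ X) (g : A ⟶ Z) (h : B ⟶ X),
    ExtremalEpi e → Mono m → g ≫ m = e ≫ h → ∃ d : B ⟶ Z, e ≫ d = g ∧ d ≫ m = h

/-- A projective filtration is reduced if it has an initial subclass of
extremal epimorphisms. -/
def ProjFilt.Reduced {X : D} (P : ProjFilt X) : Prop :=
  ∀ δ ∈ P.carrier, ∃ ε ∈ P.carrier, ExtremalEpi ε.2 ∧ Dom ε δ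

/-- The category of reduced projectively filtered objects of `D`. -/
def QObj (D : Type u) [Category.{v} D] := ObjectProperty.FullSubcategory (fun A : PObj D => A.filt.Reduced)

instance : Category.{v} (QObj D) := ObjectProperty.FullSubcategory.category _

/-- The inclusion functor `QD → PD`. -/
def qpInclusion (D : Type u) [Category.{v} D] : QObj D ⥤ PObj D :=
  ObjectProperty.ι _

/-- A category is extremally co-well-powered if every object has, up to
isomorphism, only a (small) set of extremal epimorphisms out of it. -/
def ECWP (C : Type u₂) [Category.{v₂} C] : Prop :=
  ∀ X : C, ∃ (ι : Type v₂) (Y : ι → C) (e : ∀ i, X ⟶ Y i),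
    (∀ i, ExtremalEpi (e i)) ∧
    ∀ ⦃Z : C⦄ (f : X ⟶ Z), ExtremalEpi f → ∃ (i : ι) (φ : Y i ≅ Z), e i ≫ φ.hom = f

/-- The category `(P, D)` associated to a projective filtration: objects are the
elements of `P`, morphisms `δ₁ → δ₂` are morphisms `g` of `D` with `g ∘ δ₁ = δ₂`. -/
def FiltCat {X : D} (P : ProjFilt X) : Type (max u v) := {δ : MorFrom X // δ ∈ P.carrier}

instance {X : D} (P : ProjFilt X) : Category.{v} (FiltCat P) where
  Hom δ₁ δ₂ := {g : δ₁.1.1 ⟶ δ₂.1.1 // δ₁.1.2 ≫ g = δ₂.1.2}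
  id δ := ⟨𝟙 _, Category.comp_id _⟩
  comp f g := ⟨f.1 ≫ g.1, by rw [← Category.assoc, f.2, g.2]⟩
  id_comp f := Subtype.ext (Category.id_comp _)
  comp_id f := Subtype.ext (Category.comp_id _)
  assoc f g h := Subtype.ext (Category.assoc _ _ _)

/-- The functor `(P, D) → D` sending an element of the filtration to its target. -/
def FiltDiagram {X : D} (P : ProjFilt X) : FiltCat P ⥤ D where
  obj δ := δ.1.1
  map g := g.1

/-- The canonical cone on the diagram of a projective filtration, with apex the
underlying object. -/
def filtCone {X : D} (P : ProjFilt X) : Limits.Cone (FiltDiagram P) where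
  pt := X
  π :=
    { app := fun δ => δ.1.2
      naturality := fun δ₁ δ₂ g => by
        have := g.2
        dsimp [FiltDiagram] at *
        simp [this] }

/-- A reduced projective filtration is an iso-filtration if the canonical cone
on its diagram is a limit cone, i.e. the limit exists and the canonical morphism
from the underlying object to it is an isomorphism. -/
def IsoFilt {X : D} (P : ProjFilt X) : Prop :=
  Nonempty (Limits.IsLimit (filtCone P))

/-- The category of iso-filtered objects of `D`. -/
def KObj (D : Type u) [Category.{v} D] :=
  ObjectProperty.FullSubcategory (fun A : QObj D => IsoFilt A.obj.filt)

instance : Category.{v} (KObj D) := ObjectProperty.FullSubcategory.category _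

/-- The inclusion functor `KD → QD`. -/
def kqInclusion (D : Type u) [Category.{v} D] : KObj D ⥤ QObj D :=
  ObjectProperty.ι _

/-- The forgetful functor `KD → D`. -/
def Kforget (D : Type u) [Category.{v} D] : KObj D ⥤ D :=
  kqInclusion D ⋙ qpInclusion D ⋙ Pforget D

/-- The smallest projective filtration containing a class of morphisms
(as a class). -/
def genSet {X : D} (S : Set (MorFrom X)) : Set (MorFrom X) :=
  {δ | ∀ P : ProjFilt X, S ⊆ P.carrier → δ ∈ P.carrier}

/-- The reduction of a class of morphisms: the saturation of the class of
extremal epimorphism parts of (extremal epi, mono)-factorisations of its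
elements. -/
def redSet {X : D} (S : Set (MorFrom X)) : Set (MorFrom X) :=
  {δ | ∃ ε : MorFrom X, ExtremalEpi ε.2 ∧
    (∃ δ' ∈ S, ∃ m : ε.1 ⟶ δ'.1, Mono m ∧ ε.2 ≫ m = δ'.2) ∧ Dom ε δ}

/-- The push forward of a filtration class along `f` (single morphism case). -/
def pushSet {X Y : D} (f : X ⟶ Y) (S : Set (MorFrom X)) : Set (MorFrom Y) :=
  {g | (⟨g.1, f ≫ g.2⟩ : MorFrom X) ∈ S}

/-- The discrete filtration on an object, as an iso-filtered object. -/
def kDiscreteObj (X : D) : KObj D where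
  obj :=
    { obj := (Pdiscrete D).obj X
      property := fun δ _ => ⟨⟨X, 𝟙 X⟩, trivial,
        ⟨(inferInstance : Epi (𝟙 X)), fun _ g m hm hgm => by
          haveI : IsSplitEpi m := ⟨⟨⟨g, hgm⟩⟩⟩
          exact isIso_of_mono_of_isSplitEpi m⟩,
        ⟨δ.2, Category.id_comp _⟩⟩ }
  property := ⟨{
    lift := fun c => c.π.app ⟨⟨X, 𝟙 X⟩, trivial⟩
    fac := fun c j => by
      have h := c.π.naturality (X := ⟨⟨X, 𝟙 X⟩, trivial⟩) (Y := j)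
        ⟨j.1.2, Category.id_comp _⟩
      dsimp [FiltDiagram, filtCone] at h ⊢
      exact h.symm.trans (Category.id_comp _)
    uniq := fun c m hm => by
      have h := hm ⟨⟨X, 𝟙 X⟩, trivial⟩
      rw [← Category.comp_id m]
      exact h }⟩

/-- The discrete filtration functor `D → KD`. -/
def kDiscrete (D : Type u) [Category.{v} D] : D ⥤ KObj D where
  obj X := kDiscreteObj X
  map f := ⟨f, fun _ _ => trivial⟩
  map_id _ := rfl
  map_comp _ _ := rfl

/-- The morphism in `KD` from an iso-filtered object to the discrete object on
the target of an element of its filtration. -/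
def kToDiscrete {A : KObj D} (δ : MorFrom A.obj.obj.base)
    (hδ : δ ∈ A.obj.obj.filt.carrier) : A ⟶ kDiscreteObj δ.1 :=
  ⟨⟨show PHom A.obj.obj ((kDiscreteObj δ.1).obj.obj) from
    ⟨δ.2, fun γ _ => A.obj.obj.filt.saturated' δ hδ _ ⟨γ.2, rfl⟩⟩⟩⟩

/-- The natural transformation `P(G) → P(H)` induced by `ν : G → H`. -/
def Pnat {E : Type u₂} [Category.{v₂} E] {G H : D ⥤ E} (ν : G ⟶ H) :
    Pfunctor G ⟶ Pfunctor H where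
  app A :=
    ⟨ν.app A.base, by
      rintro δ' ⟨δ, hδ, g, hg⟩
      exact ⟨δ, hδ, ⟨ν.app δ.1 ≫ g, by
        rw [← Category.assoc, ν.naturality, Category.assoc, hg]; rfl⟩⟩⟩
  naturality {A B} f := PHom.ext' (ν.naturality (PHom.toHom f))


/-! ### Auxiliary material for Statement 11 -/

@[simp] theorem QObj.comp_toHom' {A B C : QObj D} (f : A ⟶ B) (g : B ⟶ C) :
    PHom.toHom (f ≫ g).hom = PHom.toHom f.hom ≫ PHom.toHom g.hom := rfl

@[simp] theorem QObj.id_toHom' (A : QObj D) :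
    PHom.toHom (InducedCategory.Hom.hom (𝟙 A)) = 𝟙 A.obj.base := rfl

theorem QHom.ext' {A B : QObj D} {f g : A ⟶ B}
    (h : PHom.toHom f.hom = PHom.toHom g.hom) : f = g := InducedCategory.hom_ext (PHom.ext' h)

/-- The discrete (reduced) filtered object on `W`. -/
def discQ (W : D) : QObj D := (kDiscreteObj W).obj

theorem qMono_of_mono {A B : QObj D} (f : A ⟶ B) (hf : Mono (PHom.toHom f.hom)) :
    Mono f := by
  constructor
  intro C u v huv
  exact QHom.ext' (hf.right_cancellation _ _
    (by simpa using congrArg (fun x => PHom.toHom x.hom) huv))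

theorem qEpi_of_epi {A B : QObj D} (f : A ⟶ B) (hf : Epi (PHom.toHom f.hom)) :
    Epi f := by
  constructor
  intro C u v huv
  exact QHom.ext' (hf.left_cancellation _ _
    (by simpa using congrArg (fun x => PHom.toHom x.hom) huv))

theorem mono_toHom_of_qMono {A B : QObj D} (f : A ⟶ B) (hf : Mono f) :
    Mono (PHom.toHom f.hom) := by
  constructor
  intro W u v huv
  let ub : discQ W ⟶ A := ⟨show PHom _ _ from ⟨u, fun δ _ => trivial⟩⟩
  let vb : discQ W ⟶ A := ⟨show PHom _ _ from ⟨v, fun δ _ => trivial⟩⟩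
  have h1 : ub ≫ f = vb ≫ f := QHom.ext' huv
  have h2 := hf.right_cancellation ub vb h1
  exact congrArg (fun x => PHom.toHom x.hom) h2

theorem isIso_toHom_of_qIso {A B : QObj D} (f : A ⟶ B) (hf : IsIso f) :
    IsIso (PHom.toHom f.hom) := by
  obtain ⟨g, hg1, hg2⟩ := hf
  exact ⟨PHom.toHom g.hom, by simpa using congrArg (fun x => PHom.toHom x.hom) hg1,
    by simpa using congrArg (fun x => PHom.toHom x.hom) hg2⟩

theorem extremalEpi_comp_isIso {X Y Z : D} (e : X ⟶ Y) (m : Y ⟶ Z)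
    (he : ExtremalEpi e) (hm : IsIso m) : ExtremalEpi (e ≫ m) := by
  haveI := he.1
  refine ⟨epi_comp _ _, ?_⟩
  intro W g n hn hgn
  haveI := hn
  have h1 : g ≫ (n ≫ inv m) = e := by
    rw [← Category.assoc, hgn, Category.assoc, IsIso.hom_inv_id, Category.comp_id]
  have h2 : IsIso (n ≫ inv m) := he.2 g (n ≫ inv m) inferInstance h1
  have h3 : n = (n ≫ inv m) ≫ m := by simp
  rw [h3]
  exact IsIso.comp_isIso

/-- The push forward of a projective filtration along an arbitrary morphism. -/
def pushFilt [Limits.HasLimits D] {X Z : D} (e : X ⟶ Z) (P : ProjFilt X) :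
    ProjFilt Z where
  carrier := pushSet e P.carrier
  nonempty' := by
    obtain ⟨α, hα⟩ := P.nonempty'
    refine ⟨⟨⊤_ D, terminal.from Z⟩, ?_⟩
    exact P.saturated' α hα _ ⟨terminal.from α.1, terminal.hom_ext _ _⟩
  directed' := by
    intro δ₁ h₁ δ₂ h₂
    refine ⟨⟨δ₁.1 ⨯ δ₂.1, prod.lift δ₁.2 δ₂.2⟩, ?_, ⟨prod.fst, prod.lift_fst _ _⟩,
      ⟨prod.snd, prod.lift_snd _ _⟩⟩
    obtain ⟨α, hα, ⟨k₁, hk₁⟩, ⟨k₂, hk₂⟩⟩ := P.directed' _ h₁ _ h₂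
    refine P.saturated' α hα _ ⟨prod.lift k₁ k₂, ?_⟩
    apply Limits.prod.hom_ext
    · dsimp only
      rw [Category.assoc, Category.assoc]
      erw [prod.lift_fst, prod.lift_fst]
      exact hk₁
    · dsimp only
      rw [Category.assoc, Category.assoc]
      erw [prod.lift_snd, prod.lift_snd]
      exact hk₂
  saturated' := by
    rintro δ hδ δ₂ ⟨h, hh⟩
    exact P.saturated' _ hδ _ ⟨h, by rw [Category.assoc, hh]⟩

theorem pushFilt_reduced [Limits.HasLimits D] (hEM : EMCat D) {X Z : D}
    (e : X ⟶ Z) {P : ProjFilt X} (hP : P.Reduced) : (pushFilt e P).Reduced := by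
  rintro δ hδ
  obtain ⟨W, ε, m, hε, hm, hεm⟩ := hEM.fact δ.2
  refine ⟨⟨W, ε⟩, ?_, hε, ⟨m, hεm⟩⟩
  obtain ⟨εA, hεA, hεAe, k, hk⟩ := hP ⟨δ.1, e ≫ δ.2⟩ hδ
  obtain ⟨d, hd1, hd2⟩ := hEM.diag εA.2 m (e ≫ ε) k hεAe hm
    (by rw [Category.assoc, hεm]; exact hk.symm)
  exact P.saturated' εA hεA _ ⟨d, hd1⟩

/-- The push forward filtered object along a morphism out of the base. -/
def qPushObj [Limits.HasLimits D] (hEM : EMCat D) (A : QObj D) {Z : D}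
    (e : A.obj.base ⟶ Z) : QObj D :=
  ⟨⟨Z, pushFilt e A.obj.filt⟩, pushFilt_reduced hEM e A.property⟩

/-- The canonical morphism to the push forward. -/
def toPush [Limits.HasLimits D] (hEM : EMCat D) (A : QObj D) {Z : D}
    (e : A.obj.base ⟶ Z) : A ⟶ qPushObj hEM A e :=
  ⟨show PHom _ _ from ⟨e, fun _ hδ => hδ⟩⟩

/-- A morphism of `QD` with extremal epi underlying morphism whose target
filtration is the push forward is an extremal epi in `QD`. -/
theorem qExtremal_of [Limits.HasLimits D] {A B : QObj D} (f : A ⟶ B)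
    (he : ExtremalEpi (PHom.toHom f.hom))
    (hQ : ∀ δ ∈ pushSet (PHom.toHom f.hom) A.obj.filt.carrier, δ ∈ B.obj.filt.carrier) :
    ExtremalEpi f := by
  refine ⟨qEpi_of_epi f he.1, ?_⟩
  intro C g n hn hgn
  have hn' : Mono (PHom.toHom n.hom) := mono_toHom_of_qMono n hn
  have hcomp : PHom.toHom g.hom ≫ PHom.toHom n.hom = PHom.toHom f.hom := by
    simpa using congrArg (fun x => PHom.toHom x.hom) hgn
  have hiso : IsIso (PHom.toHom n.hom) := he.2 _ _ hn' hcomp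
  have hfe : PHom.toHom f.hom ≫ inv (PHom.toHom n.hom) = PHom.toHom g.hom := by
    rw [← hcomp]; simp
  have hmem : ∀ γ ∈ C.obj.filt.carrier,
      (⟨γ.1, inv (PHom.toHom n.hom) ≫ γ.2⟩ : MorFrom B.obj.base) ∈ B.obj.filt.carrier := by
    intro γ hγ
    apply hQ
    show (⟨γ.1, PHom.toHom f.hom ≫ inv (PHom.toHom n.hom) ≫ γ.2⟩ : MorFrom A.obj.base)
      ∈ A.obj.filt.carrier
    rw [← Category.assoc, hfe]
    exact PHom.mem g.hom γ hγ
  let i : B ⟶ C := ⟨show PHom B.obj C.obj from ⟨inv (PHom.toHom n.hom), hmem⟩⟩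
  refine ⟨⟨i, QHom.ext' ?_, QHom.ext' ?_⟩⟩
  · show PHom.toHom n.hom ≫ inv (PHom.toHom n.hom) = 𝟙 _
    simp
  · show inv (PHom.toHom n.hom) ≫ PHom.toHom n.hom = 𝟙 _
    simp

/-- Conversely, an extremal epi in `QD` has an extremal epi underlying morphism
and its target filtration is the push forward of the source filtration. -/
theorem qExtremal_char [Limits.HasLimits D] (hEM : EMCat D) {A B : QObj D}
    (f : A ⟶ B) (hf : ExtremalEpi f) :
    ExtremalEpi (PHom.toHom f.hom) ∧
      B.obj.filt.carrier = pushSet (PHom.toHom f.hom) A.obj.filt.carrier := by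
  constructor
  · obtain ⟨Z, e', m', he', hm', hfac⟩ := hEM.fact (PHom.toHom f.hom)
    let mb : qPushObj hEM A e' ⟶ B := ⟨show PHom _ _ from ⟨m', fun β hβ => by
      show (⟨β.1, e' ≫ m' ≫ β.2⟩ : MorFrom A.obj.base) ∈ A.obj.filt.carrier
      rw [← Category.assoc, hfac]
      exact PHom.mem f.hom β hβ⟩⟩
    have hcomp : toPush hEM A e' ≫ mb = f := QHom.ext' hfac
    have hiso : IsIso mb := hf.2 (toPush hEM A e') mb (qMono_of_mono mb hm') hcomp
    have hiso' : IsIso m' := isIso_toHom_of_qIso mb hiso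
    have hfe : PHom.toHom f.hom = e' ≫ m' := hfac.symm
    rw [hfe]
    exact extremalEpi_comp_isIso e' m' he' hiso'
  · apply Set.Subset.antisymm
    · intro β hβ
      exact PHom.mem f.hom β hβ
    · let nb : qPushObj hEM A (PHom.toHom f.hom) ⟶ B :=
        ⟨show PHom _ _ from ⟨𝟙 B.obj.base, fun β hβ => by
          show (⟨β.1, PHom.toHom f.hom ≫ 𝟙 B.obj.base ≫ β.2⟩ : MorFrom A.obj.base)
            ∈ A.obj.filt.carrier
          simpa using PHom.mem f.hom β hβ⟩⟩
      have hcomp : toPush hEM A (PHom.toHom f.hom) ≫ nb = f :=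
        QHom.ext' (Category.comp_id _)
      have hiso : IsIso nb :=
        hf.2 (toPush hEM A (PHom.toHom f.hom)) nb
          (qMono_of_mono nb (by show Mono (𝟙 B.obj.base); infer_instance)) hcomp
      obtain ⟨i, hi1, hi2⟩ := hiso
      have hiid0 : PHom.toHom i.hom ≫ 𝟙 B.obj.base = 𝟙 B.obj.base :=
        congrArg (fun x => PHom.toHom x.hom) hi2
      have hiid : PHom.toHom i.hom = 𝟙 B.obj.base :=
        (Category.comp_id (PHom.toHom i.hom)).symm.trans hiid0
      rintro ⟨Y, a⟩ hδ
      have hmem := PHom.mem i.hom ⟨Y, a⟩ hδ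
      simp only [hiid, Category.id_comp] at hmem
      exact (show (⟨Y, 𝟙 B.obj.base ≫ a⟩ : MorFrom B.obj.base) = ⟨Y, a⟩ by
        rw [Category.id_comp]) ▸ hmem

/-- `QD` is an (extremal epi, mono) category. -/
theorem qobj_em_category [Limits.HasLimits D] [Limits.HasColimits D]
    (hecwp : ECWP D) (hEM : EMCat D) :
    EMCat (QObj D) := by
  constructor
  · intro A B f
    obtain ⟨Z, e, m, he, hm, hem⟩ := hEM.fact (PHom.toHom f.hom)
    refine ⟨qPushObj hEM A e, toPush hEM A e,
      ⟨show PHom _ _ from ⟨m, fun β hβ => ?_⟩⟩, ?_, ?_, ?_⟩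
    · show (⟨β.1, e ≫ m ≫ β.2⟩ : MorFrom A.obj.base) ∈ A.obj.filt.carrier
      rw [← Category.assoc, hem]
      exact PHom.mem f.hom β hβ
    · exact qExtremal_of (toPush hEM A e) he (fun δ hδ => hδ)
    · exact qMono_of_mono _ hm
    · exact QHom.ext' hem
  · intro A B C X eb mb gb hb heb hmb hsq
    obtain ⟨heD, hQ⟩ := qExtremal_char hEM eb heb
    have hmD := mono_toHom_of_qMono mb hmb
    have hsq' : PHom.toHom gb.hom ≫ PHom.toHom mb.hom = PHom.toHom eb.hom ≫ PHom.toHom hb.hom := by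
      simpa using congrArg (fun x => PHom.toHom x.hom) hsq
    obtain ⟨d, hd1, hd2⟩ := hEM.diag _ _ _ _ heD hmD hsq'
    have hmem : ∀ γ ∈ C.obj.filt.carrier,
        (⟨γ.1, d ≫ γ.2⟩ : MorFrom B.obj.base) ∈ B.obj.filt.carrier := by
      intro γ hγ
      rw [hQ]
      show (⟨γ.1, PHom.toHom eb.hom ≫ d ≫ γ.2⟩ : MorFrom A.obj.base) ∈ A.obj.filt.carrier
      rw [← Category.assoc, hd1]
      exact PHom.mem gb.hom γ hγ
    exact ⟨⟨show PHom B.obj C.obj from ⟨d, hmem⟩⟩, QHom.ext' hd1, QHom.ext' hd2⟩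

end FilteredCats
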